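/- arXiv:1309.4153 — 2 statements merged into one kernel-verified Lean document; each statement's English description precedes it below -/
import Mathlib

section
/- With $m^{(n)}$, $\bm g$, $\bm M$, $h_{\ell 0}^{(n)}$ as in the linear-fractional iteration (and $h_{\ell 0}^{(0)} = 0$ for all $\ell$), one has $\prod_{n'=1}^n \frac{1}{1 + m - m\sum_{\ell'=1}^k g_{\ell'} h_{\ell' 0}^{(n'-1)}} = \frac{1}{1 + m^{(n)}}$. -/
open Matrix in
theorem stmt_7 (k : ℕ) (M : Matrix (Fin k) (Fin k) ℝ) (g : Fin k → ℝ) (m : ℝ)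
    (hm : 0 < m) (hgnn : ∀ i, 0 ≤ g i) (hg : ∑ i, g i = 1)
    (mN : ℕ → ℝ) (gN : ℕ → Fin k → ℝ) (HN : ℕ → Matrix (Fin k) (Fin k) ℝ)
    (h0 : ℕ → Fin k → ℝ)
    (hmN : ∀ j, mN j = m * (g ⬝ᵥ (∑ i ∈ Finset.range j, M ^ i).mulVec (fun _ => 1)))
    (hmNpos : ∀ j, 1 ≤ j → 0 < mN j)
    (hgN : ∀ j, 1 ≤ j →
      gN j = (m / mN j) • Matrix.vecMul g (∑ i ∈ Finset.range j, M ^ i))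
    (hHN : ∀ j, 1 ≤ j →
      HN j = M ^ j - (mN j / (1 + mN j)) • (M ^ j * Matrix.vecMulVec (fun _ => 1) (gN j)))
    (hh0zero : ∀ l, h0 0 l = 0)
    (hh0 : ∀ j, 1 ≤ j → ∀ l, h0 j l = 1 - (HN j).mulVec (fun _ => 1) l) :
    ∀ n : ℕ, ∏ n' ∈ Finset.Icc 1 n, (1 / (1 + m - m * ∑ l, g l * h0 (n' - 1) l)) =
      1 / (1 + mN n) := by
  -- abbreviation
  set a : ℕ → ℝ := fun j => g ⬝ᵥ (M ^ j).mulVec (fun _ => 1) with ha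
  have hmN' : ∀ j, mN j = m * ∑ i ∈ Finset.range j, a i := by
    intro j
    rw [hmN j]
    congr 1
    induction j with
    | zero => simp
    | succ j ih =>
      rw [Finset.sum_range_succ, Finset.sum_range_succ, ← ih, Matrix.add_mulVec,
        dotProduct_add]
  have hmN0 : mN 0 = 0 := by simp [hmN' 0]
  have hmNsucc : ∀ j, mN (j + 1) = mN j + m * a j := by
    intro j
    rw [hmN' (j+1), hmN' j, Finset.sum_range_succ]
    ring
  have hmNnonneg : ∀ j, 0 ≤ mN j := by
    intro j
    cases j with
    | zero => simp [hmN0]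
    | succ j => exact (hmNpos _ (by omega)).le
  have h1mN : ∀ j, (0:ℝ) < 1 + mN j := fun j => by linarith [hmNnonneg j]
  -- sum of gN is 1
  have hsumgN : ∀ j, 1 ≤ j → ∑ l, gN j l = 1 := by
    intro j hj
    have hmj := hmNpos j hj
    rw [hgN j hj]
    have : ∑ l, ((m / mN j) • Matrix.vecMul g (∑ i ∈ Finset.range j, M ^ i)) l
        = (m / mN j) * (g ⬝ᵥ (∑ i ∈ Finset.range j, M ^ i).mulVec (fun _ => 1)) := by
      simp only [Pi.smul_apply, smul_eq_mul, ← Finset.mul_sum]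
      congr 1
      simp only [Matrix.vecMul, Matrix.mulVec, dotProduct, Finset.mul_sum, mul_one]
      exact Finset.sum_comm
    rw [this]
    have hmNj := hmN j
    field_simp
    linarith [hmNj]
  -- key dot product identity
  have hkey : ∀ j, 1 ≤ j → g ⬝ᵥ (HN j).mulVec (fun _ => 1) = a j / (1 + mN j) := by
    intro j hj
    rw [hHN j hj, Matrix.sub_mulVec, dotProduct_sub, Matrix.smul_mulVec,
      dotProduct_smul, ← Matrix.mulVec_mulVec]
    have hv : (Matrix.vecMulVec ((fun _ => (1:ℝ)) : Fin k → ℝ) (gN j)).mulVec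
          ((fun _ => (1:ℝ)) : Fin k → ℝ) = fun _ => (1:ℝ) := by
      funext r
      simp [Matrix.vecMulVec, Matrix.mulVec, dotProduct, hsumgN j hj]
    rw [hv]
    have h1 : (0:ℝ) < 1 + mN j := h1mN j
    simp only [ha]
    field_simp
    have hc : (1 + mN j)⁻¹ * (1 + mN j) = 1 := inv_mul_cancel₀ h1.ne'
    linear_combination (-(mN j * (g ⬝ᵥ (M ^ j).mulVec (fun _ => (1:ℝ))))) * hc
  -- main product identity per step
  have hstep : ∀ j, (1 + m - m * ∑ l, g l * h0 j l) * (1 + mN j) = 1 + mN (j + 1) := by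
    intro j
    cases j with
    | zero =>
      simp only [hh0zero, mul_zero, Finset.sum_const_zero, hmN0]
      have : mN 1 = m := by
        rw [hmNsucc 0, hmN0, ha]
        simp only [pow_zero, Matrix.one_mulVec]
        simp [dotProduct, hg]
      rw [this]; ring
    | succ j =>
      have hj : 1 ≤ j + 1 := by omega
      have hsum : ∑ l, g l * h0 (j+1) l = 1 - g ⬝ᵥ (HN (j+1)).mulVec (fun _ => 1) := by
        simp only [hh0 (j+1) hj, mul_sub, mul_one, Finset.sum_sub_distrib, hg]
        rfl
      rw [hsum, hkey (j+1) hj, hmNsucc (j+1)]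
      have h1 : (0:ℝ) < 1 + mN (j+1) := h1mN (j+1)
      field_simp
      ring
  intro n
  induction n with
  | zero => simp [hmN0]
  | succ n ih =>
    rw [Finset.prod_Icc_succ_top (by omega), ih]
    simp only [Nat.add_sub_cancel]
    have h1 := h1mN n
    have h2 := h1mN (n + 1)
    have h3 := hstep n
    have hne : (1 + m - m * ∑ l, g l * h0 n l) ≠ 0 := by
      intro h
      rw [h, zero_mul] at h3
      linarith
    field_simp
    nlinarith [h3]
end

section
/- Fix $k$, a substochastic matrix $\bm H$ with rows $\bm h_a$, a probability vector $\bm g$ and $m>0$, defining $f_a(\bm s) = h_{a0} + \frac{\sum_{\ell'} h_{a\ell'} s_{\ell'}}{1+m-m\sum_{\ell'} g_{\ell'} s_{\ell'}}$. For a vector $\bm q = (q_1,\dots,q_k) \in [0,1)^k$ (interpreted as extinction probabilities $q_\ell = 1 - p_\ell$), set $U = 1 + m - m\sum_{\ell'} g_{\ell'} q_{\ell'}$, $V_a = \sum_{\ell'} h_{a\ell'} q_{\ell'}$, and $p'_a = 1 - f_a(\bm q)$. Then $\frac{1}{p'_a} \sum_{b=1}^k (1 - q_b) \frac{\partial f_a}{\partial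 s_b}(\bm q) = \frac{1}{U}$; in particular this quantity is independent of $a$. -/
theorem stmt_8 (k : ℕ) (H : Fin k → Fin k → ℝ) (g : Fin k → ℝ) (m : ℝ)
    (hH : ∀ a b, 0 ≤ H a b) (hHrow : ∀ a, ∑ b, H a b ≤ 1)
    (hg : ∀ b, 0 ≤ g b) (hgsum : ∑ b, g b = 1) (hm : 0 < m)
    (q : Fin k → ℝ) (hq : ∀ b, q b ∈ Set.Ico (0:ℝ) 1)
    (f : Fin k → (Fin k → ℝ) → ℝ)
    (hf : ∀ a s, f a s = (1 - ∑ b, H a b) +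
      (∑ b, H a b * s b) / (1 + m - m * ∑ b, g b * s b))
    (U : ℝ) (hU : U = 1 + m - m * ∑ b, g b * q b) (hUpos : 0 < U)
    (p' : Fin k → ℝ) (hp' : ∀ a, p' a = 1 - f a q) (hp'pos : ∀ a, 0 < p' a) :
    ∀ a, (1 / p' a) * ∑ b, (1 - q b) *
        deriv (fun t => f a (Function.update q b t)) (q b) = 1 / U := by
  intro a
  have hUne : U ≠ 0 := hUpos.ne'
  obtain ⟨S, hS⟩ : ∃ S : ℝ, S = ∑ b, H a b := ⟨_, rfl⟩
  obtain ⟨V, hV⟩ : ∃ V : ℝ, V = ∑ b, H a b * q b := ⟨_, rfl⟩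
  -- derivative computation
  have hderiv : ∀ b : Fin k, deriv (fun t => f a (Function.update q b t)) (q b)
      = (H a b * U + m * g b * V) / U ^ 2 := by
    intro b
    have hnum : ∀ t : ℝ, ∑ c, H a c * Function.update q b t c = V + H a b * (t - q b) := by
      intro t
      have h1 : ∀ c : Fin k, H a c * Function.update q b t c
          = H a c * q c + (if c = b then H a b * (t - q b) else 0) := by
        intro c
        rcases eq_or_ne c b with h | h
        · subst h; rw [Function.update_self, if_pos rfl]; ring
        · rw [Function.update_of_ne h, if_neg h, add_zero]
      simp only [h1, Finset.sum_add_distrib, Finset.sum_ite_eq', Finset.mem_univ, if_true]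
      rw [← hV]
    have hden : ∀ t : ℝ, ∑ c, g c * Function.update q b t c
        = (∑ c, g c * q c) + g b * (t - q b) := by
      intro t
      have h1 : ∀ c : Fin k, g c * Function.update q b t c
          = g c * q c + (if c = b then g b * (t - q b) else 0) := by
        intro c
        rcases eq_or_ne c b with h | h
        · subst h; rw [Function.update_self, if_pos rfl]; ring
        · rw [Function.update_of_ne h, if_neg h, add_zero]
      simp only [h1, Finset.sum_add_distrib, Finset.sum_ite_eq', Finset.mem_univ, if_true]
    have hfun : (fun t => f a (Function.update q b t)) = fun t =>
        (1 - S) + (V + H a b * (t - q b)) /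
          (1 + m - m * ((∑ c, g c * q c) + g b * (t - q b))) := by
      funext t
      rw [hf, hnum t, hden t, ← hS]
    rw [hfun]
    have hden0 : 1 + m - m * ((∑ c, g c * q c) + g b * (q b - q b)) = U := by
      rw [hU]; ring
    have h1 : HasDerivAt (fun t : ℝ => V + H a b * (t - q b)) (H a b) (q b) := by
      have := (((hasDerivAt_id (q b)).sub_const (q b)).const_mul (H a b)).const_add V
      simpa using this
    have h2 : HasDerivAt (fun t : ℝ => 1 + m - m * ((∑ c, g c * q c) + g b * (t - q b)))
        (-(m * g b)) (q b) := by
      have := ((((hasDerivAt_id (q b)).sub_const (q b)).const_mul (g b)).const_add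
        (∑ c, g c * q c)).const_mul m
      have h3 := this.const_sub (1 + m)
      simpa using h3
    have h3 := (h1.div h2 (by rw [hden0]; exact hUne)).const_add (1 - S)
    have h4 := h3.deriv
    simp only [Pi.div_apply] at h4
    rw [h4, hden0]
    ring
  simp only [hderiv]
  have hfa : f a q = (1 - S) + V / U := by
    rw [hf, ← hV, ← hU, ← hS]
  have hpa : p' a = (U * S - V) / U := by
    rw [hp', hfa]; field_simp; ring
  have hne : U * S - V ≠ 0 := by
    have := hp'pos a
    rw [hpa] at this
    intro h
    rw [h] at this
    simp at this
  have hsum : ∑ b, (1 - q b) * ((H a b * U + m * g b * V) / U ^ 2)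
      = (U * S - V) / U ^ 2 := by
    simp only [← mul_div_assoc]
    rw [← Finset.sum_div]
    congr 1
    have e1 : ∑ b, (1 - q b) * (H a b * U + m * g b * V)
        = ∑ b, (U * H a b - U * (H a b * q b) + (m * V * g b - m * V * (g b * q b))) :=
      Finset.sum_congr rfl (fun b _ => by ring)
    rw [e1]
    simp only [Finset.sum_add_distrib, Finset.sum_sub_distrib, ← Finset.mul_sum]
    rw [← hS, ← hV, hgsum]
    linear_combination (-V) * hU
  rw [hsum, hpa]
  field_simp
end
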